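/- There exist two distinct finite weighted multisets of positive reals whose weighted ReLU sums agree under every linear map: for every real w, 1·ReLU(w·2) − 1·ReLU(w·1) + (1/4)·ReLU(w·4) = 1·ReLU(w·6) − 1·ReLU(w·4), even though the multisets {2, 1, 4} and {6, 4} are not equal (as multisets of reals). -/
import Mathlib


/-- ReLU on the reals. -/
noncomputable def ReLU (t : ℝ) : ℝ := max t 0

/-- There exist two distinct weighted multisets of positive reals, namely
`{2, 1, 4}` with weights `1, -1, 1/4` and `{6, 4}` with weights `1, -1`,
whose weighted ReLU sums agree under every linear map `t ↦ w * t`. -/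
theorem stmt0 :
    (∀ w : ℝ,
      1 * ReLU (w * 2) - 1 * ReLU (w * 1) + (1 / 4) * ReLU (w * 4)
        = 1 * ReLU (w * 6) - 1 * ReLU (w * 4)) ∧
    ({2, 1, 4} : Multiset ℝ) ≠ ({6, 4} : Multiset ℝ) := by
  constructor
  · intro w
    rcases le_total 0 w with h | h
    · have h2 : ReLU (w * 2) = w * 2 := max_eq_left (by linarith)
      have h1 : ReLU (w * 1) = w * 1 := max_eq_left (by linarith)
      have h4 : ReLU (w * 4) = w * 4 := max_eq_left (by linarith)
      have h6 : ReLU (w * 6) = w * 6 := max_eq_left (by linarith)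
      rw [h2, h1, h4, h6]; ring
    · have h2 : ReLU (w * 2) = 0 := max_eq_right (by linarith)
      have h1 : ReLU (w * 1) = 0 := max_eq_right (by linarith)
      have h4 : ReLU (w * 4) = 0 := max_eq_right (by linarith)
      have h6 : ReLU (w * 6) = 0 := max_eq_right (by linarith)
      rw [h2, h1, h4, h6]; ring
  · intro h
    have := congrArg Multiset.card h
    simp at this
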